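/- Let S be a finite 2-group that is nonabelian of maximal class (i.e. dihedral, semidihedral, or generalized quaternion of order 2^k, k ≥ 3). If P is a subgroup of S whose automorphism group Aut(P) is not a 2-group, then P is isomorphic to C₂ × C₂ or to Q₈. -/

import Mathlib

open Subgroup

namespace Stmt6Aux



lemma eq_of_ne_one {K : Type*} [Group K] (h : Nat.card K = 2) {u v : K}
    (hu : u ≠ 1) (hv : v ≠ 1) : u = v := by
  rw [Nat.card_eq_two_iff' (1 : K)] at h
  obtain ⟨b, -, hb⟩ := h
  rw [hb u hu, hb v hv]

lemma mem_of_index_two {G : Type*} [Group G] {H : Subgroup G} (h : H.index = 2)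
    {a b : G} (ha : a ∉ H) (hb : b ∉ H) : a⁻¹ * b ∈ H := by
  rw [Subgroup.mul_mem_iff_of_index_two h, inv_mem_iff]
  simp [ha, hb]

lemma isPGroup_mulAut_of_isCyclic {G : Type*} [Group G] [Finite G]
    (hc : IsCyclic G) (hp : IsPGroup 2 G) : IsPGroup 2 (MulAut G) := by
  haveI := Fact.mk Nat.prime_two
  obtain ⟨t, ht⟩ := IsPGroup.iff_card.mp hp
  apply IsPGroup.of_card (n := t - 1)
  rw [IsCyclic.card_mulAut, ht]
  cases t with
  | zero => simp
  | succ t =>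
    rw [Nat.totient_prime_pow Nat.prime_two (Nat.succ_pos t)]
    simp

lemma eq_pow_of_sq_eq_one {G : Type*} [Group G] {g c : G} {t : ℕ}
    (hg : orderOf g = 2 ^ t) (hc : c ∈ zpowers g) (hc2 : c ^ 2 = 1) (hc1 : c ≠ 1) :
    c = g ^ 2 ^ (t - 1) := by
  obtain ⟨m, hm⟩ := Subgroup.mem_zpowers_iff.mp hc
  rcases Nat.eq_zero_or_pos t with rfl | htpos
  · exfalso
    have hg1 : g = 1 := orderOf_eq_one_iff.mp (by simpa using hg)
    exact hc1 (by rw [← hm, hg1, one_zpow])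
  have hz : g ^ (2 * m) = 1 := by
    rw [mul_comm, zpow_mul, hm]
    exact_mod_cast hc2
  have hdvd : (orderOf g : ℤ) ∣ 2 * m := orderOf_dvd_iff_zpow_eq_one.mpr hz
  rw [hg] at hdvd
  have hdvd' : ((2 : ℤ)) ^ (t - 1) ∣ m := by
    obtain ⟨q, hq⟩ := hdvd
    refine ⟨q, ?_⟩
    have h2t : ((2:ℤ) ^ t) = 2 * 2 ^ (t - 1) := by
      rw [← pow_succ']
      congr 1
      omega
    push_cast at hq
    rw [h2t] at hq
    linarith
  obtain ⟨q, hq⟩ := hdvd'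
  have hw2 : (g ^ 2 ^ (t - 1) : G) ^ 2 = 1 := by
    rw [← pow_mul, ← pow_succ]
    have h1 : t - 1 + 1 = t := by omega
    rw [h1, ← hg]
    exact pow_orderOf_eq_one g
  have hcw : c = (g ^ 2 ^ (t - 1)) ^ q := by
    rw [← hm, hq, ← zpow_natCast g, ← zpow_mul]
    push_cast
    ring_nf
  rcases Int.even_or_odd q with ⟨u, hu⟩ | ⟨u, hu⟩
  · exfalso
    apply hc1
    rw [hcw, hu, ← two_mul, zpow_mul]
    norm_cast
    rw [hw2, one_zpow]
  · rw [hcw, hu, zpow_add, zpow_mul]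
    norm_cast
    rw [hw2, one_zpow, one_mul, pow_one]




variable {G : Type*} [Group G] [Finite G]

omit [Finite G] in
lemma maut_pow_apply (φ : MulAut G) (m : ℕ) (g : G) :
    (φ ^ (m + 1)) g = φ ((φ ^ m) g) := by
  rw [pow_succ']
  rfl

lemma isPGroup_mulAut_of_char (C : Subgroup G)
    (hchar : ∀ (φ : MulAut G), ∀ c ∈ C, φ c ∈ C)
    (hcyc : IsCyclic C) (hp : IsPGroup 2 C) (hidx : C.index = 2)
    (hAutC : IsPGroup 2 (MulAut C))
    (hmem2 : ∀ {a b : G}, a ∉ C → b ∉ C → a⁻¹ * b ∈ C) :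
    IsPGroup 2 (MulAut G) := by
  haveI := Fact.mk Nat.prime_two
  obtain ⟨t, ht⟩ := IsPGroup.iff_card.mp hp
  let res : MulAut G →* MulAut C :=
    { toFun := fun φ =>
        { toFun := fun c => ⟨φ c, hchar φ c c.2⟩
          invFun := fun c => ⟨φ⁻¹ c, hchar φ⁻¹ c c.2⟩
          left_inv := fun c => Subtype.ext <| by
            show φ⁻¹ (φ c) = c
            simp
          right_inv := fun c => Subtype.ext <| by
            show φ (φ⁻¹ c) = c
            simp
          map_mul' := fun c d => Subtype.ext <| by
            show φ (c * d) = φ c * φ d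
            simp }
      map_one' := by ext c; rfl
      map_mul' := fun φ ψ => by ext c; rfl }
  intro ψ
  obtain ⟨n, hn⟩ := hAutC (res ψ)
  have h1 : res (ψ ^ 2 ^ n) = 1 := by rw [map_pow, hn]
  set φ := ψ ^ 2 ^ n with hφ
  have hfix : ∀ c ∈ C, φ c = c := by
    intro c hc
    have := DFunLike.congr_fun h1 (⟨c, hc⟩ : C)
    exact congrArg Subtype.val this
  have hout : ∀ g : G, g ∉ C → φ g ∉ C := by
    intro g hg hφg
    exact hg (by
      have h2 : φ (φ g) = φ g := hfix _ hφg
      have h3 : φ g = g := φ.injective h2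
      rwa [← h3])
  have key : ∀ g : G, (φ ^ 2 ^ t) g = g := by
    intro g
    by_cases hg : g ∈ C
    · -- powers fix g
      have : ∀ m : ℕ, (φ ^ m) g = g := by
        intro m
        induction m with
        | zero => rfl
        | succ m ih => rw [maut_pow_apply, ih]; exact hfix g hg
      exact this _
    · have hc : g⁻¹ * φ g ∈ C := hmem2 hg (hout g hg)
      set c := g⁻¹ * φ g with hcdef
      have hφg : φ g = g * c := by rw [hcdef]; group
      have hiter : ∀ m : ℕ, (φ ^ m) g = g * c ^ m := by
        intro m
        induction m with
        | zero => simp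
        | succ m ih =>
          rw [maut_pow_apply, ih, map_mul, hφg, map_pow, hfix c hc, pow_succ, mul_assoc]
          rw [(Commute.self_pow c m).eq]
      rw [hiter]
      have : c ^ 2 ^ t = 1 := by
        have := pow_card_eq_one' (x := (⟨c, hc⟩ : C))
        rw [ht] at this
        have := congrArg Subtype.val this
        simpa using this
      rw [this, mul_one]
  refine ⟨n + t, ?_⟩
  have : ψ ^ 2 ^ (n + t) = (φ : MulAut G) ^ 2 ^ t := by
    rw [hφ, ← pow_mul, ← pow_add]
  rw [this]
  ext g
  exact key g




lemma mulEquiv_quaternion {G : Type*} [Group G] [Finite G]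
    (hcard : Nat.card G = 8) (d x : G) (hd : orderOf d = 4)
    (hx : x ∉ zpowers d) (hx2 : x ^ 2 = d ^ 2)
    (hconj : x * d * x⁻¹ = d⁻¹) : Nonempty (G ≃* QuaternionGroup 2) := by
  haveI : NeZero (2 * 2) := ⟨by norm_num⟩
  set h : ZMod (2 * 2) → G := fun i => d ^ i.val with hh
  have horder : orderOf d = 2 * 2 := by rw [hd]
  have hadd : ∀ i j : ZMod (2 * 2), h (i + j) = h i * h j := by
    intro i j
    show d ^ (i + j).val = d ^ i.val * d ^ j.val
    rw [← pow_add, ZMod.val_add]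
    have hmo : d ^ ((i.val + j.val) % orderOf d) = d ^ (i.val + j.val) := pow_mod_orderOf d _
    rw [horder] at hmo
    exact hmo
  have h0 : h 0 = 1 := by
    show d ^ (0 : ZMod (2*2)).val = 1
    rw [ZMod.val_zero, pow_zero]
  have h1 : h 1 = d := by
    show d ^ (1 : ZMod (2*2)).val = d
    have hv : (1 : ZMod (2*2)).val = 1 := rfl
    rw [hv, pow_one]
  have h2 : h 2 = d ^ 2 := by
    show d ^ (2 : ZMod (2*2)).val = d ^ 2
    have hv : (2 : ZMod (2*2)).val = 2 := rfl
    rw [hv]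
  have hneg : ∀ i : ZMod (2 * 2), h (-i) = (h i)⁻¹ := by
    intro i
    have : h (-i) * h i = 1 := by rw [← hadd, neg_add_cancel, h0]
    exact eq_inv_of_mul_eq_one_left this
  have hconj' : ∀ i : ZMod (2 * 2), x * h i * x⁻¹ = (h i)⁻¹ := by
    intro i
    show x * d ^ i.val * x⁻¹ = (d ^ i.val)⁻¹
    rw [← conj_pow, hconj, inv_pow]
  have hswap : ∀ i : ZMod (2 * 2), h i * x = x * h (-i) := by
    intro i
    have e := hconj' (-i)
    rw [hneg i, inv_inv] at e
    rw [hneg i]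
    calc h i * x = (x * (h i)⁻¹ * x⁻¹) * x := by rw [e]
    _ = x * (h i)⁻¹ := by group
  set f0 : QuaternionGroup 2 → G := fun q =>
    match q with
    | QuaternionGroup.a i => h i
    | QuaternionGroup.xa i => x * h i
    with hf0
  have hmul : ∀ q₁ q₂, f0 (q₁ * q₂) = f0 q₁ * f0 q₂ := by
    rintro (i | i) (j | j)
    · rw [QuaternionGroup.a_mul_a]
      exact hadd i j
    · rw [QuaternionGroup.a_mul_xa]
      show x * h (j - i) = h i * (x * h j)
      rw [sub_eq_neg_add, hadd, ← mul_assoc, ← hswap, mul_assoc]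
    · rw [QuaternionGroup.xa_mul_a]
      show x * h (i + j) = (x * h i) * h j
      rw [hadd, mul_assoc]
    · rw [QuaternionGroup.xa_mul_xa]
      show h ((2 : ℕ) + j - i) = (x * h i) * (x * h j)
      have : ((2:ℕ) : ZMod (2*2)) + j - i = 2 + (-i + j) := by push_cast; ring
      rw [this, hadd, hadd, h2, ← hx2]
      calc x ^ 2 * (h (-i) * h j) = x * (x * h (-i)) * h j := by rw [pow_two]; group
      _ = x * (h i * x) * h j := by rw [← hswap]
      _ = (x * h i) * (x * h j) := by group
  let f : QuaternionGroup 2 →* G := MonoidHom.mk' f0 hmul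
  have hd_mem : d ∈ f.range := ⟨QuaternionGroup.a 1, h1⟩
  have hx_mem : x ∈ f.range := ⟨QuaternionGroup.xa 0, by show x * h 0 = x; rw [h0, mul_one]⟩
  have hzle : zpowers d ≤ f.range := (zpowers_le).mpr hd_mem
  have hidx : (zpowers d).index = 2 := by
    have h1' := Subgroup.card_mul_index (zpowers d)
    rw [Nat.card_zpowers, hd, hcard] at h1'
    omega
  have hdvd := Subgroup.index_dvd_of_le hzle
  rw [hidx] at hdvd
  have hsurj : Function.Surjective f := by
    rw [← MonoidHom.range_eq_top]
    rcases (Nat.dvd_prime Nat.prime_two).mp hdvd with he | he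
    · exact Subgroup.index_eq_one.mp he
    · exfalso
      apply hx
      have c1 := Subgroup.card_mul_index f.range
      rw [he, hcard] at c1
      have c2 : Nat.card (zpowers d) = 4 := by rw [Nat.card_zpowers, hd]
      have : zpowers d = f.range :=
        Subgroup.eq_of_le_of_card_ge hzle (by omega)
      rw [this]
      exact hx_mem
  have hcards : Nat.card (QuaternionGroup 2) = Nat.card G := by
    rw [hcard, Nat.card_eq_fintype_card, QuaternionGroup.card]
  have hbij : Function.Bijective f :=
    (Nat.bijective_iff_surjective_and_card f).mpr ⟨hsurj, hcards⟩
  exact ⟨(MulEquiv.ofBijective f hbij).symm⟩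




lemma isPGroup_mulAut_abelian {G : Type*} [Group G] [Finite G]
    (hcomm : ∀ a b : G, a * b = b * a) (d x : G)
    (hd : orderOf d = 4) (hx : orderOf x = 2) (hxd : x ∉ zpowers d)
    (hcard : Nat.card G = 8) : IsPGroup 2 (MulAut G) := by
  letI : CommGroup G := { (inferInstance : Group G) with mul_comm := hcomm }
  have x2 : x ^ (2:ℕ) = 1 := by rw [← hx]; exact pow_orderOf_eq_one x
  have xne1 : x ≠ 1 := by
    intro h; rw [h] at hx; simp at hx
  have d4 : d ^ (4:ℤ) = 1 := by
    have := pow_orderOf_eq_one d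
    rw [hd] at this
    exact_mod_cast this
  have d2ne1 : d ^ (2:ℤ) ≠ 1 := by
    intro h
    have : orderOf d ∣ 2 := orderOf_dvd_iff_pow_eq_one.mpr (by exact_mod_cast h)
    rw [hd] at this
    omega
  have hsqmem : ∀ c : G, c ∈ zpowers d → c ^ (2:ℤ) = 1 → c = 1 ∨ c = d ^ (2:ℤ) := by
    intro c hc hc2
    by_cases h1 : c = 1
    · exact Or.inl h1
    · right
      have := eq_pow_of_sq_eq_one (t := 2) (by rw [hd]; norm_num) hc (by exact_mod_cast hc2) h1
      rw [this]
      norm_cast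
  have hidx : (zpowers d).index = 2 := by
    have h1 := Subgroup.card_mul_index (zpowers d)
    rw [Nat.card_zpowers, hd, hcard] at h1
    omega
  have hdecomp : ∀ g : G, (∃ m : ℤ, g = d ^ m) ∨ (∃ m : ℤ, g = x * d ^ m) := by
    intro g
    by_cases hg : g ∈ zpowers d
    · obtain ⟨m, hm⟩ := Subgroup.mem_zpowers_iff.mp hg
      exact Or.inl ⟨m, hm.symm⟩
    · obtain ⟨m, hm⟩ := Subgroup.mem_zpowers_iff.mp (mem_of_index_two hidx hxd hg)
      right
      exact ⟨m, by rw [hm]; group⟩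
  -- main per-automorphism facts
  have main : ∀ φ : MulAut G, ((φ * φ) x = x) ∧ ∃ e : ℤ, (φ * φ) d = d ^ e ∧ d ^ (2*e) = d ^ (2:ℤ) := by
    intro φ
    -- φ fixes d^2
    have hφd2 : φ (d ^ (2:ℤ)) = d ^ (2:ℤ) := by
      have hne : φ (d ^ (2:ℤ)) ≠ 1 := by
        intro h
        exact d2ne1 (φ.injective (by rw [h, map_one]))
      have hmem : φ (d ^ (2:ℤ)) ∈ zpowers d := by
        rcases hdecomp (φ d) with ⟨a, ha⟩ | ⟨a, ha⟩
        · rw [map_zpow, ha, ← zpow_mul]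
          exact zpow_mem (mem_zpowers d) _
        · rw [map_zpow, ha, mul_zpow, ← zpow_mul]
          have : x ^ (2:ℤ) = 1 := by exact_mod_cast x2
          rw [this, one_mul]
          exact zpow_mem (mem_zpowers d) _
      have hsq : (φ (d ^ (2:ℤ))) ^ (2:ℤ) = 1 := by
        rw [← map_zpow, ← zpow_mul]
        have h24 : (2:ℤ) * 2 = 4 := by norm_num
        rw [h24, d4, map_one]
      rcases hsqmem _ hmem hsq with h | h
      · exact absurd h hne
      · exact h
    -- φ x = x * w with w ∈ {1, d^2}
    have hφx : ∃ w : G, φ x = x * w ∧ φ w = w ∧ w * w = 1 ∧ w ∈ zpowers d := by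
      rcases hdecomp (φ x) with ⟨a, ha⟩ | ⟨a, ha⟩
      · exfalso
        have hmem : φ x ∈ zpowers d := ha ▸ zpow_mem (mem_zpowers d) _
        have hsq : (φ x) ^ (2:ℤ) = 1 := by
          rw [← map_zpow]
          have : x ^ (2:ℤ) = 1 := by exact_mod_cast x2
          rw [this, map_one]
        have hne : φ x ≠ 1 := fun h => xne1 (φ.injective (by rw [h, map_one]))
        rcases hsqmem _ hmem hsq with h | h
        · exact hne h
        · exact hxd (by
            have := φ.injective (h.trans hφd2.symm)
            rw [this]
            exact zpow_mem (mem_zpowers d) _)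
      · refine ⟨d ^ a, ha, ?_, ?_, zpow_mem (mem_zpowers d) _⟩
        · -- φ (d^a) = d^a, since (d^a)^2 = 1
          have hsq : (d ^ a) ^ (2:ℤ) = 1 := by
            have h1 : (φ x) ^ (2:ℤ) = 1 := by
              rw [← map_zpow]
              have : x ^ (2:ℤ) = 1 := by exact_mod_cast x2
              rw [this, map_one]
            rw [ha, mul_zpow] at h1
            have : x ^ (2:ℤ) = 1 := by exact_mod_cast x2
            rwa [this, one_mul] at h1
          rcases hsqmem _ (zpow_mem (mem_zpowers d) _) hsq with h | h
          · rw [h, map_one]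
          · rw [h, hφd2]
        · have hsq : (d ^ a) ^ (2:ℤ) = 1 := by
            have h1 : (φ x) ^ (2:ℤ) = 1 := by
              rw [← map_zpow]
              have : x ^ (2:ℤ) = 1 := by exact_mod_cast x2
              rw [this, map_one]
            rw [ha, mul_zpow] at h1
            have : x ^ (2:ℤ) = 1 := by exact_mod_cast x2
            rwa [this, one_mul] at h1
          have hsq' := hsq
          rw [zpow_two] at hsq'
          exact hsq'
    obtain ⟨w, hw1, hw2, hw3, hw4⟩ := hφx
    constructor
    · rw [MulAut.mul_apply, hw1, map_mul, hw1, hw2, mul_assoc, hw3, mul_one]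
    · -- φ² d
      rcases hdecomp (φ d) with ⟨a, ha⟩ | ⟨a, ha⟩
      · have h2a : d ^ (2*a) = d ^ (2:ℤ) := by
          have : φ (d ^ (2:ℤ)) = d ^ (2*a) := by
            rw [map_zpow, ha, ← zpow_mul, mul_comm a 2]
          rw [← this, hφd2]
        refine ⟨a * a, ?_, ?_⟩
        · rw [MulAut.mul_apply, ha, map_zpow, ha, ← zpow_mul]
        · have : d ^ (2 * (a*a)) = (d ^ (2*a)) ^ a := by rw [← zpow_mul]; ring_nf
          rw [this, h2a, ← zpow_mul]
          first
          | exact h2a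
          | (rw [show a * 2 = 2 * a by ring]; exact h2a)
      · have h2a : d ^ (2*a) = d ^ (2:ℤ) := by
          have : φ (d ^ (2:ℤ)) = d ^ (2*a) := by
            rw [map_zpow, ha, mul_zpow]
            have hx2' : x ^ (2:ℤ) = 1 := by exact_mod_cast x2
            rw [hx2', one_mul, ← zpow_mul, mul_comm a 2]
          rw [← this, hφd2]
        have haodd : ∃ v : ℤ, a = 2 * v + 1 := by
          have hdvd : ((orderOf d : ℤ)) ∣ 2*a - 2 := orderOf_dvd_sub_iff_zpow_eq_zpow.mpr h2a
          rw [hd] at hdvd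
          obtain ⟨q, hq⟩ := hdvd
          exact ⟨q, by omega⟩
        obtain ⟨v, hv⟩ := haodd
        have hxa : x ^ a = x := by
          rw [hv, zpow_add, zpow_mul]
          have : x ^ (2:ℤ) = 1 := by exact_mod_cast x2
          rw [this, one_zpow, one_mul, zpow_one]
        -- w = d ^ a' ; get exponent for w
        obtain ⟨a', hwa⟩ := Subgroup.mem_zpowers_iff.mp hw4
        have hw2a' : d ^ (2*a') = 1 := by
          rw [two_mul, zpow_add, hwa, hw3]
        refine ⟨a' + a * a, ?_, ?_⟩
        · rw [MulAut.mul_apply, ha, map_mul, hw1, map_zpow, ha, mul_zpow, ← zpow_mul, hxa]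
          calc x * w * (x * d ^ (a*a)) = (x * x) * (w * d ^ (a*a)) := by
                ac_rfl
          _ = w * d ^ (a*a) := by
              have : x * x = 1 := by rw [← pow_two]; exact x2
              rw [this, one_mul]
          _ = d ^ (a' + a*a) := by rw [← hwa, ← zpow_add]
        · rw [mul_add, zpow_add, hw2a', one_mul]
          have h5 : d ^ (2 * (a*a)) = (d ^ (2*a)) ^ a := by rw [← zpow_mul]; ring_nf
          rw [h5, h2a, ← zpow_mul]
          first
          | exact h2a
          | (rw [show a * 2 = 2 * a by ring]; exact h2a)
  -- conclude
  intro φ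
  refine ⟨2, ?_⟩
  obtain ⟨hx', e, he, h2e⟩ := main φ
  have heodd : ∃ f : ℤ, e = 2 * f + 1 := by
    have hdvd : ((orderOf d : ℤ)) ∣ 2*e - 2 := orderOf_dvd_sub_iff_zpow_eq_zpow.mpr h2e
    rw [hd] at hdvd
    obtain ⟨q, hq⟩ := hdvd
    exact ⟨q, by omega⟩
  obtain ⟨f, hf⟩ := heodd
  have hee : d ^ (e * e) = d := by
    have : e * e = 4 * (f * f + f) + 1 := by rw [hf]; ring
    rw [this, zpow_add, zpow_mul, d4, one_zpow, one_mul, zpow_one]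
  set ψ := φ * φ with hψ
  have hψd : ∀ m : ℤ, (ψ * ψ) (d ^ m) = d ^ m := by
    intro m
    rw [map_zpow, MulAut.mul_apply, he, map_zpow, he, ← zpow_mul, ← zpow_mul]
    rw [show e * (e * m) = (e * e) * m by ring, zpow_mul, hee]
  have hψx : (ψ * ψ) x = x := by
    rw [MulAut.mul_apply, hx', hx']
  have hfin : ψ * ψ = 1 := by
    ext g
    show (ψ * ψ) g = g
    rcases hdecomp g with ⟨m, hm⟩ | ⟨m, hm⟩
    · rw [hm, hψd]
    · rw [hm, map_mul, hψx, hψd]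
  have h4 : (2:ℕ) ^ (2:ℕ) = 2 * 2 := by norm_num
  rw [h4, pow_mul]
  simp only [pow_two]
  exact hfin




/-- Uniform structure of a maximal-class 2-group (or the degenerate abelian SD case). -/
def MaxClassStruct (k : ℕ) (S : Type*) [Group S] : Prop :=
  ∃ r : S, orderOf r = 2 ^ (k - 1) ∧ Nat.card S = 2 ^ k ∧ (zpowers r).Normal ∧
    (∀ x : S, x ∉ zpowers r → x ^ 2 = 1 ∨ x ^ 2 = r ^ 2 ^ (k - 2)) ∧
    ((∀ x : S, x ∉ zpowers r → ∀ c ∈ zpowers r, orderOf c ∣ 4 → x * c * x⁻¹ = c⁻¹) ∨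
      ((∀ a b : S, a * b = b * a) ∧
        (∃ s : S, orderOf s = 2 ∧ s ∉ zpowers r ∧ Subgroup.closure {r, s} = ⊤) ∧ k = 3))

lemma dihedral_struct {k : ℕ} (hk : 3 ≤ k) {S : Type*} [Group S]
    (e : S ≃* DihedralGroup (2 ^ (k - 1))) : MaxClassStruct k S := by
  haveI : NeZero (2 ^ (k - 1)) := ⟨by positivity⟩
  set rr : S := e.symm (DihedralGroup.r 1) with hrr
  have her : e rr = DihedralGroup.r 1 := e.apply_symm_apply _
  have hmem : ∀ x : S, x ∈ zpowers rr ↔ e x ∈ zpowers (DihedralGroup.r (1 : ZMod (2 ^ (k-1)))) := by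
    intro x
    rw [Subgroup.mem_zpowers_iff, Subgroup.mem_zpowers_iff]
    constructor
    · rintro ⟨m, hm⟩
      exact ⟨m, by rw [← hm, map_zpow, her]⟩
    · rintro ⟨m, hm⟩
      exact ⟨m, e.injective (by rw [map_zpow, her, hm])⟩
  have hri : ∀ i : ZMod (2 ^ (k-1)), DihedralGroup.r i ∈ zpowers (DihedralGroup.r (1 : ZMod (2 ^ (k-1)))) := by
    intro i
    rw [Subgroup.mem_zpowers_iff]
    refine ⟨(i.val : ℤ), ?_⟩
    rw [zpow_natCast, DihedralGroup.r_one_pow]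
    congr 1
    simp [ZMod.natCast_val, ZMod.cast_id]
  have hclass : ∀ y : DihedralGroup (2 ^ (k-1)), y ∉ zpowers (DihedralGroup.r (1 : ZMod (2 ^ (k-1)))) →
      ∃ i, y = DihedralGroup.sr i := by
    intro y hy
    cases y with
    | r i => exact absurd (hri i) hy
    | sr i => exact ⟨i, rfl⟩
  have hsrinv : ∀ i : ZMod (2 ^ (k-1)), (DihedralGroup.sr i)⁻¹ = DihedralGroup.sr i := by
    intro i
    exact inv_eq_of_mul_eq_one_right (DihedralGroup.sr_mul_self i)
  have hconjbase : ∀ i : ZMod (2 ^ (k-1)),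
      DihedralGroup.sr i * DihedralGroup.r 1 * (DihedralGroup.sr i)⁻¹ = (DihedralGroup.r 1)⁻¹ := by
    intro i
    rw [hsrinv, DihedralGroup.sr_mul_r, DihedralGroup.sr_mul_sr]
    have h2 : (DihedralGroup.r (1:ZMod (2 ^ (k-1))))⁻¹ = DihedralGroup.r (-1) := by
      refine inv_eq_of_mul_eq_one_right ?_
      rw [DihedralGroup.r_mul_r]
      simp [DihedralGroup.one_def, -DihedralGroup.r_zero]
    rw [h2]
    congr 1
    ring
  have hconj : ∀ y : DihedralGroup (2 ^ (k-1)), y ∉ zpowers (DihedralGroup.r (1 : ZMod (2 ^ (k-1)))) →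
      ∀ m : ℤ, y * (DihedralGroup.r 1) ^ m * y⁻¹ = ((DihedralGroup.r 1) ^ m)⁻¹ := by
    intro y hy m
    obtain ⟨i, rfl⟩ := hclass y hy
    rw [← conj_zpow, hconjbase, inv_zpow]
  refine ⟨rr, ?_, ?_, ?_, ?_, Or.inl ?_⟩
  · rw [hrr, MulEquiv.orderOf_eq, DihedralGroup.orderOf_r_one]
  · rw [Nat.card_congr e.toEquiv, DihedralGroup.nat_card]
    rw [← pow_succ']
    congr 1
    omega
  · constructor
    intro h hh g
    rw [hmem] at hh ⊢
    obtain ⟨m, hm⟩ := Subgroup.mem_zpowers_iff.mp hh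
    rw [map_mul, map_mul, map_inv, ← hm]
    by_cases hg : e g ∈ zpowers (DihedralGroup.r (1 : ZMod (2 ^ (k-1))))
    · exact mul_mem (mul_mem hg (by rw [hm]; exact hh)) (inv_mem hg)
    · rw [hconj _ hg m]
      exact inv_mem (zpow_mem (mem_zpowers _) m)
  · intro x hx
    left
    rw [hmem] at hx
    obtain ⟨i, hi⟩ := hclass _ hx
    apply e.injective
    rw [map_pow, map_one, hi, pow_two, DihedralGroup.sr_mul_self]
  · intro x hx c hc _
    rw [hmem] at hx
    obtain ⟨m, hm⟩ := Subgroup.mem_zpowers_iff.mp ((hmem c).mp hc)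
    apply e.injective
    rw [map_mul, map_mul, map_inv, map_inv, ← hm, hconj _ hx m]

lemma quaternion_struct {k : ℕ} (hk : 3 ≤ k) {S : Type*} [Group S]
    (e : S ≃* QuaternionGroup (2 ^ (k - 2))) : MaxClassStruct k S := by
  haveI : NeZero (2 ^ (k - 2)) := ⟨by positivity⟩
  set n : ℕ := 2 ^ (k - 2) with hn
  set rr : S := e.symm (QuaternionGroup.a 1) with hrr
  have her : e rr = QuaternionGroup.a 1 := e.apply_symm_apply _
  have hmem : ∀ x : S, x ∈ zpowers rr ↔ e x ∈ zpowers (QuaternionGroup.a (1 : ZMod (2 * n))) := by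
    intro x
    rw [Subgroup.mem_zpowers_iff, Subgroup.mem_zpowers_iff]
    constructor
    · rintro ⟨m, hm⟩
      exact ⟨m, by rw [← hm, map_zpow, her]⟩
    · rintro ⟨m, hm⟩
      exact ⟨m, e.injective (by rw [map_zpow, her, hm])⟩
  have hai : ∀ i : ZMod (2 * n), QuaternionGroup.a i ∈ zpowers (QuaternionGroup.a (1 : ZMod (2 * n))) := by
    intro i
    rw [Subgroup.mem_zpowers_iff]
    refine ⟨(i.val : ℤ), ?_⟩
    rw [zpow_natCast, QuaternionGroup.a_one_pow]
    congr 1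
    simp [ZMod.natCast_val, ZMod.cast_id]
  have hclass : ∀ y : QuaternionGroup n, y ∉ zpowers (QuaternionGroup.a (1 : ZMod (2 * n))) →
      ∃ i, y = QuaternionGroup.xa i := by
    intro y hy
    cases y with
    | a i => exact absurd (hai i) hy
    | xa i => exact ⟨i, rfl⟩
  have hconjbase : ∀ i : ZMod (2 * n),
      QuaternionGroup.xa i * QuaternionGroup.a 1 * (QuaternionGroup.xa i)⁻¹ = (QuaternionGroup.a 1)⁻¹ := by
    intro i
    have hainv : (QuaternionGroup.a (1 : ZMod (2*n)))⁻¹ = QuaternionGroup.a (-1) := by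
      refine inv_eq_of_mul_eq_one_right ?_
      rw [QuaternionGroup.a_mul_a]
      simp [QuaternionGroup.one_def, -QuaternionGroup.a_zero]
    have h1 : QuaternionGroup.xa i * QuaternionGroup.a 1 = (QuaternionGroup.a 1)⁻¹ * QuaternionGroup.xa i := by
      rw [QuaternionGroup.xa_mul_a, hainv, QuaternionGroup.a_mul_xa]
      congr 1
      ring
    calc QuaternionGroup.xa i * QuaternionGroup.a 1 * (QuaternionGroup.xa i)⁻¹
        = ((QuaternionGroup.a 1)⁻¹ * QuaternionGroup.xa i) * (QuaternionGroup.xa i)⁻¹ := by rw [h1]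
      _ = (QuaternionGroup.a 1)⁻¹ := by group
  have hconj : ∀ y : QuaternionGroup n, y ∉ zpowers (QuaternionGroup.a (1 : ZMod (2 * n))) →
      ∀ m : ℤ, y * (QuaternionGroup.a 1) ^ m * y⁻¹ = ((QuaternionGroup.a 1) ^ m)⁻¹ := by
    intro y hy m
    obtain ⟨i, rfl⟩ := hclass y hy
    rw [← conj_zpow, hconjbase, inv_zpow]
  refine ⟨rr, ?_, ?_, ?_, ?_, Or.inl ?_⟩
  · rw [hrr, MulEquiv.orderOf_eq, QuaternionGroup.orderOf_a_one]
    rw [← pow_succ']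
    congr 1
    omega
  · rw [Nat.card_congr e.toEquiv, Nat.card_eq_fintype_card, QuaternionGroup.card]
    rw [show (4:ℕ) = 2 ^ 2 by norm_num, ← pow_add]
    congr 1
    omega
  · constructor
    intro h hh g
    rw [hmem] at hh ⊢
    obtain ⟨m, hm⟩ := Subgroup.mem_zpowers_iff.mp hh
    rw [map_mul, map_mul, map_inv, ← hm]
    by_cases hg : e g ∈ zpowers (QuaternionGroup.a (1 : ZMod (2 * n)))
    · exact mul_mem (mul_mem hg (by rw [hm]; exact hh)) (inv_mem hg)
    · rw [hconj _ hg m]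
      exact inv_mem (zpow_mem (mem_zpowers _) m)
  · intro x hx
    right
    rw [hmem] at hx
    obtain ⟨i, hi⟩ := hclass _ hx
    apply e.injective
    rw [map_pow, hi, QuaternionGroup.xa_sq, map_pow, her, QuaternionGroup.a_one_pow]
  · intro x hx c hc _
    rw [hmem] at hx
    obtain ⟨m, hm⟩ := Subgroup.mem_zpowers_iff.mp ((hmem c).mp hc)
    apply e.injective
    rw [map_mul, map_mul, map_inv, map_inv, ← hm, hconj _ hx m]

lemma semidihedral_struct {k : ℕ} (hk : 3 ≤ k) {S : Type*} [Group S] [Finite S]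
    (h : ∃ r s : S, orderOf r = 2 ^ (k - 1) ∧ orderOf s = 2 ∧
      s * r * s⁻¹ = r ^ (2 ^ (k - 2) - 1) ∧ Subgroup.closure {r, s} = ⊤ ∧
      Nat.card S = 2 ^ k) : MaxClassStruct k S := by
  obtain ⟨r, s, hr, hs, hrel, hgen, hcard⟩ := h
  have hss : s * s = 1 := by
    have := pow_orderOf_eq_one s
    rwa [hs, pow_two] at this
  have hsinv : s⁻¹ = s := inv_eq_of_mul_eq_one_right hss
  have hconjr : ∀ m : ℤ, s * r ^ m * s⁻¹ = (r ^ m) ^ (2 ^ (k - 2) - 1 : ℕ) := by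
    intro m
    rw [← conj_zpow, hrel, ← zpow_natCast, ← zpow_mul, ← zpow_natCast (r ^ m), ← zpow_mul]
    congr 1
    ring
  have hHcard : Nat.card (zpowers r) = 2 ^ (k - 1) := by rw [Nat.card_zpowers, hr]
  have hidx : (zpowers r).index = 2 := by
    have h1 := Subgroup.card_mul_index (zpowers r)
    rw [hHcard, hcard] at h1
    have h2 : (2:ℕ) ^ k = 2 ^ (k-1) * 2 := by
      rw [← pow_succ]
      congr 1
      omega
    have h3 : 0 < (2:ℕ) ^ (k-1) := by positivity
    rw [h2] at h1
    exact Nat.eq_of_mul_eq_mul_left h3 h1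
  have hsH : s ∉ zpowers r := by
    intro hmem
    have hle : Subgroup.closure ({r, s} : Set S) ≤ zpowers r := by
      rw [Subgroup.closure_le]
      rintro y (rfl | rfl)
      · exact mem_zpowers y
      · exact hmem
    rw [hgen] at hle
    have : (zpowers r).index = 1 := by
      rw [Subgroup.index_eq_one]
      exact le_antisymm le_top hle
    omega
  have hclass : ∀ x : S, x ∉ zpowers r → ∃ m : ℤ, x = s * r ^ m := by
    intro x hx
    obtain ⟨m, hm⟩ := Subgroup.mem_zpowers_iff.mp (mem_of_index_two hidx hsH hx)
    refine ⟨m, ?_⟩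
    rw [hm]
    group
  have hz2 : (r ^ (2 ^ (k-2) : ℕ)) ^ (2:ℕ) = 1 := by
    rw [← pow_mul, ← pow_succ, show k - 2 + 1 = k - 1 by omega, ← hr]
    exact pow_orderOf_eq_one r
  have hsq : ∀ x : S, x ∉ zpowers r → x ^ 2 = 1 ∨ x ^ 2 = r ^ 2 ^ (k - 2) := by
    intro x hx
    obtain ⟨m, rfl⟩ := hclass x hx
    have hx2 : (s * r ^ m) ^ 2 = (r ^ (2 ^ (k-2) : ℕ)) ^ m := by
      have e1 : (s * r ^ m) ^ 2 = (s * r ^ m * s⁻¹) * ((s * s) * r ^ m) := by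
        rw [pow_two]
        group
      rw [e1, hss, one_mul, hconjr]
      have hcast : ((2 ^ (k - 2) - 1 : ℕ) : ℤ) = 2 ^ (k-2) - 1 := by
        have h1 : (1:ℕ) ≤ 2 ^ (k-2) := Nat.one_le_two_pow
        rw [Nat.cast_sub h1]
        push_cast
        ring
      rw [← zpow_natCast (r ^ m), ← zpow_mul, hcast]
      rw [← zpow_natCast r (2 ^ (k-2)), ← zpow_mul]
      rw [← zpow_add]
      congr 1
      push_cast
      ring
    rw [hx2]
    have hz2' : (r ^ (2 ^ (k-2) : ℕ)) ^ (2:ℤ) = 1 := by exact_mod_cast hz2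
    rcases Int.even_or_odd m with ⟨u, hu⟩ | ⟨u, hu⟩
    · left
      rw [hu, ← two_mul, zpow_mul, hz2', one_zpow]
    · right
      rw [hu, zpow_add, zpow_mul, hz2', one_zpow, one_mul, zpow_one]
  have hnormal : (zpowers r).Normal := by
    have hsn : ∀ h' ∈ zpowers r, s * h' * s⁻¹ ∈ zpowers r := by
      intro h' hh'
      obtain ⟨m, hm⟩ := Subgroup.mem_zpowers_iff.mp hh'
      rw [← hm, hconjr]
      exact pow_mem (zpow_mem (mem_zpowers r) m) _
    have hle : Subgroup.closure ({r, s} : Set S) ≤ Subgroup.normalizer (zpowers r : Set S) := by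
      rw [Subgroup.closure_le]
      rintro y (rfl | rfl)
      · exact Subgroup.le_normalizer (mem_zpowers y)
      · rw [SetLike.mem_coe, Subgroup.mem_normalizer_iff]
        intro h'
        constructor
        · intro hh'
          exact hsn h' hh'
        · intro hh'
          have h5 := hsn _ hh'
          rw [hsinv] at h5
          have e1 : y * (y * h' * y) * y = h' := by
            rw [show y * (y * h' * y) * y = (y * y) * h' * (y * y) by group, hss]
            group
          rw [← e1]
          exact h5
    rw [hgen] at hle
    exact Subgroup.normalizer_eq_top_iff.mp (le_antisymm le_top hle)
  refine ⟨r, hr, hcard, hnormal, hsq, ?_⟩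
  rcases Nat.lt_or_ge k 4 with hk4 | hk4
  · have hk3 : k = 3 := by omega
    right
    have hrel' : s * r * s⁻¹ = r := by
      rw [hrel, hk3]
      norm_num
    have hcomm_rs : s * r = r * s := by
      conv_rhs => rw [← hrel']
      group
    have habel : ∀ a b : S, a * b = b * a := by
      have hcent : ∀ g : S, g ∈ Subgroup.center S := by
        intro g
        have hle : Subgroup.closure ({r, s} : Set S) ≤ Subgroup.center S := by
          rw [Subgroup.closure_le]
          have hrc : r ∈ Subgroup.center S := by
            rw [Subgroup.mem_center_iff]
            intro g'
            have hle2 : Subgroup.closure ({r, s} : Set S) ≤ Subgroup.centralizer {r} := by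
              rw [Subgroup.closure_le]
              rintro w (rfl | rfl)
              · rw [SetLike.mem_coe, Subgroup.mem_centralizer_iff]
                rintro u (rfl : u = w)
                rfl
              · rw [SetLike.mem_coe, Subgroup.mem_centralizer_iff]
                rintro u (rfl : u = r)
                exact hcomm_rs.symm
            rw [hgen] at hle2
            have hg' := hle2 (Subgroup.mem_top g')
            rw [Subgroup.mem_centralizer_iff] at hg'
            exact (hg' r rfl).symm
          have hsc : s ∈ Subgroup.center S := by
            rw [Subgroup.mem_center_iff]
            intro g'
            have hle2 : Subgroup.closure ({r, s} : Set S) ≤ Subgroup.centralizer {s} := by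
              rw [Subgroup.closure_le]
              rintro w (rfl | rfl)
              · rw [SetLike.mem_coe, Subgroup.mem_centralizer_iff]
                rintro u (rfl : u = s)
                exact hcomm_rs
              · rw [SetLike.mem_coe, Subgroup.mem_centralizer_iff]
                rintro u (rfl : u = w)
                rfl
            rw [hgen] at hle2
            have hg' := hle2 (Subgroup.mem_top g')
            rw [Subgroup.mem_centralizer_iff] at hg'
            exact (hg' s rfl).symm
          rintro y (rfl | rfl)
          · exact hrc
          · exact hsc
        rw [hgen] at hle
        exact hle (Subgroup.mem_top g)
      intro a b
      exact (Subgroup.mem_center_iff.mp (hcent a) b).symm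
    exact ⟨habel, ⟨s, hs, hsH, hgen⟩, hk3⟩
  · left
    intro x hx c hc hord
    obtain ⟨m, rfl⟩ := hclass x hx
    obtain ⟨j, hj⟩ := Subgroup.mem_zpowers_iff.mp hc
    have hcomm' : r ^ m * c * (r ^ m)⁻¹ = c := by
      rw [← hj, ← zpow_neg, ← zpow_add, ← zpow_add]
      congr 1
      ring
    have e1 : s * r ^ m * c * (s * r ^ m)⁻¹ = s * c * s⁻¹ := by
      rw [mul_inv_rev]
      calc s * r ^ m * c * ((r ^ m)⁻¹ * s⁻¹) = s * (r ^ m * c * (r ^ m)⁻¹) * s⁻¹ := by group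
      _ = s * c * s⁻¹ := by rw [hcomm']
    rw [e1, ← hj, hconjr]
    have hc4 : (r ^ j) ^ (4:ℕ) = 1 := by
      rw [← hj] at hord
      exact orderOf_dvd_iff_pow_eq_one.mp hord
    have h4dvd : (4:ℕ) ∣ 2 ^ (k - 2) := by
      rw [show (4:ℕ) = 2 ^ 2 by norm_num]
      exact pow_dvd_pow 2 (by omega)
    have hcpow : (r ^ j) ^ (2 ^ (k-2) : ℕ) = 1 := by
      obtain ⟨q, hq⟩ := h4dvd
      rw [hq, pow_mul, hc4, one_pow]
    have hsub : (2:ℕ) ^ (k - 2) - 1 + 1 = 2 ^ (k-2) := by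
      have h1 : (1:ℕ) ≤ 2 ^ (k-2) := Nat.one_le_two_pow
      omega
    have key : (r ^ j) ^ (2 ^ (k-2) : ℕ) = (r ^ j) ^ (2 ^ (k - 2) - 1 : ℕ) * (r ^ j) := by
      rw [← pow_succ, hsub]
    calc (r ^ j) ^ (2 ^ (k - 2) - 1 : ℕ)
        = (r ^ j) ^ (2 ^ (k-2) : ℕ) * (r ^ j)⁻¹ := by rw [key]; group
    _ = (r ^ j)⁻¹ := by rw [hcpow, one_mul]


lemma kleinFour_target : IsKleinFour (Multiplicative (ZMod 2) × Multiplicative (ZMod 2)) := by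
  constructor
  · simp [Nat.card_eq_fintype_card]
  · have hpow : ∀ g : Multiplicative (ZMod 2) × Multiplicative (ZMod 2), g ^ (2:ℕ) = 1 := by decide
    have hdvd : Monoid.exponent (Multiplicative (ZMod 2) × Multiplicative (ZMod 2)) ∣ 2 :=
      Monoid.exponent_dvd_of_forall_pow_eq_one hpow
    have hne1 : Monoid.exponent (Multiplicative (ZMod 2) × Multiplicative (ZMod 2)) ≠ 1 := by
      intro h1
      obtain ⟨a, b, hab⟩ := exists_pair_ne (Multiplicative (ZMod 2) × Multiplicative (ZMod 2))
      apply hab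
      have ha := Monoid.pow_exponent_eq_one a
      have hb := Monoid.pow_exponent_eq_one b
      rw [h1, pow_one] at ha hb
      rw [ha, hb]
    rcases (Nat.dvd_prime Nat.prime_two).mp hdvd with h | h
    · exact absurd h hne1
    · exact h

end Stmt6Aux
/-- `G` is semidihedral of order `2^n`. -/
def IsSemidihedral (G : Type*) [Group G] (n : ℕ) : Prop :=
  ∃ r s : G, orderOf r = 2 ^ (n - 1) ∧ orderOf s = 2 ∧
    s * r * s⁻¹ = r ^ (2 ^ (n - 2) - 1) ∧ Subgroup.closure {r, s} = ⊤ ∧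
    Nat.card G = 2 ^ n

open Subgroup Stmt6Aux in
/-- Let `S` be a finite `2`-group that is nonabelian of maximal class (dihedral,
semidihedral, or generalized quaternion of order `2^k`, `k ≥ 3`).  If `P ≤ S` has
`Aut(P)` not a `2`-group, then `P ≅ C₂ × C₂` or `P ≅ Q₈`. -/
theorem stmt_6 (k : ℕ) (hk : 3 ≤ k) (S : Type*) [Group S] [Finite S]
    (hS : Nonempty (S ≃* DihedralGroup (2 ^ (k - 1))) ∨
      IsSemidihedral S k ∨
      Nonempty (S ≃* QuaternionGroup (2 ^ (k - 2))))
    (P : Subgroup S) (hP : ¬ IsPGroup 2 (MulAut P)) :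
    Nonempty (P ≃* (Multiplicative (ZMod 2) × Multiplicative (ZMod 2))) ∨
      Nonempty (P ≃* QuaternionGroup 2) := by
  haveI := Fact.mk Nat.prime_two
  have hstruct : MaxClassStruct k S := by
    rcases hS with he | hsd | he
    · exact dihedral_struct hk he.some
    · exact semidihedral_struct hk hsd
    · exact quaternion_struct hk he.some
  obtain ⟨r, hrord, hcardS, hnorm, hsq, hconj⟩ := hstruct
  have hz2 : (r ^ (2 ^ (k - 2) : ℕ)) ^ (2 : ℕ) = 1 := by
    rw [← pow_mul, ← pow_succ, show k - 2 + 1 = k - 1 by omega, ← hrord]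
    exact pow_orderOf_eq_one r
  have hHidx : (zpowers r).index = 2 := by
    have h1 := Subgroup.card_mul_index (zpowers r)
    rw [Nat.card_zpowers, hrord, hcardS] at h1
    have h2 : (2 : ℕ) ^ k = 2 ^ (k - 1) * 2 := by
      rw [← pow_succ]; congr 1; omega
    have h3 : 0 < (2 : ℕ) ^ (k - 1) := by positivity
    rw [h2] at h1
    exact Nat.eq_of_mul_eq_mul_left h3 h1
  obtain ⟨j, hjk, hPj⟩ : ∃ j, j ≤ k ∧ Nat.card P = 2 ^ j :=
    (Nat.dvd_prime_pow Nat.prime_two).mp (hcardS ▸ Subgroup.card_subgroup_dvd_card P)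
  have hPp : IsPGroup 2 P := IsPGroup.of_card hPj
  have hnotcyc : ¬ IsCyclic ↥P := fun hc => hP (isPGroup_mulAut_of_isCyclic hc hPp)
  haveI hcycr : IsCyclic ↥(zpowers r) := by
    refine ⟨⟨⟨r, mem_zpowers r⟩, fun x => ?_⟩⟩
    obtain ⟨m, hm⟩ := Subgroup.mem_zpowers_iff.mp x.2
    exact Subgroup.mem_zpowers_iff.mpr ⟨m, Subtype.ext (by push_cast; exact hm)⟩
  set C : Subgroup ↥P := (zpowers r).subgroupOf P with hCdef
  have hCidx_dvd : C.index ∣ 2 := by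
    have hre := Subgroup.relIndex_dvd_index_of_normal (H := zpowers r) (K := P)
    rw [hHidx] at hre
    exact hre
  have hCcyc : IsCyclic ↥C := by
    haveI : IsCyclic ↥(zpowers r ⊓ P) := Subgroup.isCyclic_of_le inf_le_left
    have e := Subgroup.subgroupOfEquivOfLe (inf_le_right : zpowers r ⊓ P ≤ P)
    rw [Subgroup.inf_subgroupOf_right] at e
    obtain ⟨g, hg⟩ := IsCyclic.exists_generator (α := ↥(zpowers r ⊓ P))
    refine ⟨⟨e.symm g, fun y => ?_⟩⟩
    obtain ⟨m, hm⟩ := Subgroup.mem_zpowers_iff.mp (hg (e y))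
    exact Subgroup.mem_zpowers_iff.mpr ⟨m, by
      apply e.injective
      rw [map_zpow, e.apply_symm_apply, hm]⟩
  rcases (Nat.dvd_prime Nat.prime_two).mp hCidx_dvd with hCidx | hCidx
  · -- `P ≤ ⟨r⟩`, so `P` is cyclic: contradiction
    have hle : P ≤ zpowers r := Subgroup.relIndex_eq_one.mp hCidx
    haveI := Subgroup.isCyclic_of_le hle
    exact (hnotcyc inferInstance).elim
  · -- index of C in P equals 2
    have hCcard2 : Nat.card C * 2 = 2 ^ j := by
      have h1 := Subgroup.card_mul_index C
      rw [hCidx, hPj] at h1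
      exact h1
    have hj1 : 1 ≤ j := by
      rcases Nat.eq_zero_or_pos j with rfl | h
      · rw [pow_zero] at hCcard2
        omega
      · exact h
    have hCcard : Nat.card C = 2 ^ (j - 1) := by
      have h2 : (2 : ℕ) ^ j = 2 ^ (j - 1) * 2 := by
        rw [← pow_succ]; congr 1; omega
      rw [h2] at hCcard2
      omega
    haveI := hCcyc
    obtain ⟨dgen, hdgen⟩ := IsCyclic.exists_generator (α := ↥C)
    set d : ↥P := (dgen : ↥P) with hd
    have hdC : d ∈ C := dgen.2
    have hzC : zpowers d = C := by
      apply le_antisymm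
      · rw [Subgroup.zpowers_le]; exact hdC
      · intro c hc
        obtain ⟨m, hm⟩ := Subgroup.mem_zpowers_iff.mp (hdgen ⟨c, hc⟩)
        refine Subgroup.mem_zpowers_iff.mpr ⟨m, ?_⟩
        have := congrArg (Subtype.val) hm
        push_cast at this
        exact this
    have hdord : orderOf d = 2 ^ (j - 1) := by
      rw [← Nat.card_zpowers, hzC, hCcard]
    have hmemC : ∀ y : ↥P, y ∈ C ↔ (y : S) ∈ zpowers r := fun y => Subgroup.mem_subgroupOf
    have hOutS : ∀ y : ↥P, y ∉ C → (y : S) ∉ zpowers r := fun y hy h => hy ((hmemC y).mpr h)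
    have hOut4 : ∀ y : ↥P, y ∉ C → orderOf y ∣ 4 := by
      intro y hy
      have h4 : ((y : S)) ^ (4 : ℕ) = 1 := by
        rcases hsq _ (hOutS y hy) with h1 | h1
        · rw [show (4 : ℕ) = 2 * 2 by norm_num, pow_mul, h1, one_pow]
        · rw [show (4 : ℕ) = 2 * 2 by norm_num, pow_mul, h1]
          exact hz2
      refine orderOf_dvd_iff_pow_eq_one.mpr (Subtype.ext ?_)
      push_cast
      exact h4
    -- the characteristic-subgroup contradiction machine
    have hcontra : (∀ φ : MulAut ↥P, ∀ c ∈ C, φ c ∈ C) → False := by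
      intro hchar
      exact hP (isPGroup_mulAut_of_char C hchar hCcyc (IsPGroup.of_card hCcard) hCidx
        (isPGroup_mulAut_of_isCyclic hCcyc (IsPGroup.of_card hCcard))
        (fun ha hb => mem_of_index_two hCidx ha hb))
    rcases Nat.lt_or_ge j 4 with hj4 | hj4
    · rcases (by omega : j = 1 ∨ j = 2 ∨ j = 3) with rfl | rfl | rfl
      · -- |P| = 2 : cyclic, contradiction
        exact (hnotcyc (isCyclic_of_prime_card (p := 2) (by rw [hPj]; norm_num))).elim
      · -- |P| = 4 : Klein four group
        left
        have hcard4 : Nat.card ↥P = 4 := by rw [hPj]; norm_num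
        haveI : Nontrivial ↥P := by
          rw [← Finite.one_lt_card_iff_nontrivial, hcard4]
          omega
        have hsq2 : ∀ g : ↥P, g ^ (2:ℕ) = 1 := by
          intro g
          by_contra hg
          have h1 : orderOf g ∣ 2 ^ 2 := by
            rw [show (2:ℕ)^2 = 4 by norm_num, ← hcard4]
            exact orderOf_dvd_natCard g
          have h2 : ¬ orderOf g ∣ 2 := fun h => hg (orderOf_dvd_iff_pow_eq_one.mp h)
          obtain ⟨i, hi, hio⟩ := (Nat.dvd_prime_pow Nat.prime_two).mp h1
          have h4 : orderOf g = 4 := by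
            rcases (by omega : i = 0 ∨ i = 1 ∨ i = 2) with rfl | rfl | rfl
            · exfalso; apply h2; rw [hio]; norm_num
            · exfalso; apply h2; rw [hio]; norm_num
            · rw [hio]; norm_num
          exact hnotcyc (isCyclic_of_orderOf_eq_card g (by rw [h4, hcard4]))
        have hexp : Monoid.exponent ↥P = 2 := by
          have hdvd : Monoid.exponent ↥P ∣ 2 :=
            Monoid.exponent_dvd_of_forall_pow_eq_one hsq2
          have hne1 : Monoid.exponent ↥P ≠ 1 := by
            intro h1
            obtain ⟨a, b, hab⟩ := exists_pair_ne ↥P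
            apply hab
            have ha := Monoid.pow_exponent_eq_one a
            have hb := Monoid.pow_exponent_eq_one b
            rw [h1, pow_one] at ha hb
            rw [ha, hb]
          rcases (Nat.dvd_prime Nat.prime_two).mp hdvd with h | h
          · exact absurd h hne1
          · exact h
        haveI hK1 : IsKleinFour ↥P := ⟨hcard4, hexp⟩
        haveI hK2 : IsKleinFour (Multiplicative (ZMod 2) × Multiplicative (ZMod 2)) :=
          kleinFour_target
        exact IsKleinFour.nonempty_mulEquiv
      · -- |P| = 8
        have hdord4 : orderOf d = 4 := by rw [hdord]; norm_num
        have hcard8 : Nat.card ↥P = 8 := by rw [hPj]; norm_num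
        obtain ⟨x, hxC⟩ : ∃ x : ↥P, x ∉ C := by
          by_contra h
          push_neg at h
          have : C = ⊤ := (Subgroup.eq_top_iff' C).mpr h
          rw [this, Subgroup.index_top] at hCidx
          omega
        have hxS : (x : S) ∉ zpowers r := hOutS x hxC
        have hdS : (d : S) ∈ zpowers r := (hmemC d).mp hdC
        have hdSord : orderOf (d : S) = 4 := by
          rw [Subgroup.orderOf_coe, hdord4]
        have hd2z : (d : S) ^ (2 : ℕ) = r ^ (2 ^ (k - 2) : ℕ) := by
          have h1 := eq_pow_of_sq_eq_one (t := k - 1) hrord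
            (pow_mem hdS 2)
            (by rw [← pow_mul]
                have : (d : S) ^ (2 * 2) = (d : S) ^ (4 : ℕ) := by norm_num
                rw [this, ← hdSord]
                exact pow_orderOf_eq_one _)
            (by intro h1
                have := orderOf_dvd_iff_pow_eq_one.mpr h1
                rw [hdSord] at this
                omega)
          rwa [show k - 1 - 1 = k - 2 by omega] at h1
        rcases hconj with hconjL | ⟨habel, ⟨s0, hs0ord, hs0H, hgen0⟩, hk3⟩
        · have hxdS : (x : S) * (d : S) * (x : S)⁻¹ = (d : S)⁻¹ :=
            hconjL _ hxS _ hdS (by rw [hdSord])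
          have hxdSm : ∀ m : ℤ, (x : S) * (d : S) ^ m * (x : S)⁻¹ = (d : S) ^ (-m) := by
            intro m
            rw [← conj_zpow, hxdS, inv_zpow, zpow_neg]
          rcases hsq _ hxS with hx1 | hxz
          · -- all elements outside C square to 1; C is characteristic
            have hOut2 : ∀ y : ↥P, y ∉ C → orderOf y ∣ 2 := by
              intro y hy
              have hxyC : x⁻¹ * y ∈ zpowers d := by
                rw [hzC]
                exact mem_of_index_two hCidx hxC hy
              obtain ⟨m, hm⟩ := Subgroup.mem_zpowers_iff.mp hxyC
              have hyx : (y : S) = (x : S) * (d : S) ^ m := by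
                have := congrArg (Subtype.val) hm
                push_cast at this
                rw [this]
                group
              have hy2 : (y : S) ^ (2:ℕ) = 1 := by
                rw [hyx, pow_two]
                calc (x:S) * (d:S)^m * ((x:S) * (d:S)^m)
                    = ((x:S) * (d:S)^m * (x:S)⁻¹) * (((x:S) * (x:S)) * (d:S)^m) := by group
                  _ = (d:S)^(-m) * (((x:S) * (x:S)) * (d:S)^m) := by rw [hxdSm]
                  _ = (d:S)^(-m) * (d:S)^m := by
                        rw [← pow_two, hx1, one_mul]
                  _ = 1 := by rw [← zpow_add]; simp
              refine orderOf_dvd_iff_pow_eq_one.mpr (Subtype.ext ?_)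
              push_cast
              exact hy2
            refine (hcontra ?_).elim
            intro φ c hc
            have hφd : φ d ∈ C := by
              by_contra hnd
              have h2 := hOut2 _ hnd
              rw [MulEquiv.orderOf_eq φ d, hdord4] at h2
              omega
            rw [← hzC] at hc hφd ⊢
            obtain ⟨m, hm⟩ := Subgroup.mem_zpowers_iff.mp hc
            rw [← hm, map_zpow]
            exact zpow_mem hφd m
          · -- Q8
            right
            have hx2d2 : x ^ (2 : ℕ) = d ^ (2 : ℕ) := by
              refine Subtype.ext ?_
              push_cast
              rw [hxz, ← hd2z]
            have hxdP : x * d * x⁻¹ = d⁻¹ := by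
              refine Subtype.ext ?_
              push_cast
              exact hxdS
            have hxzd : x ∉ zpowers d := by rw [hzC]; exact hxC
            exact mulEquiv_quaternion hcard8 d x hdord4 hxzd hx2d2 hxdP
        · -- abelian semidihedral degenerate case, k = 3
          subst hk3
          have hPtop : P = ⊤ := Subgroup.eq_top_of_card_eq P (by rw [hPj, hcardS])
          have hrP : r ∈ P := hPtop ▸ Subgroup.mem_top r
          have hsP : s0 ∈ P := hPtop ▸ Subgroup.mem_top s0
          refine (hP (isPGroup_mulAut_abelian
            (fun a b => Subtype.ext (habel a b)) ⟨r, hrP⟩ ⟨s0, hsP⟩ ?_ ?_ ?_ hcard8)).elim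
          · rw [Subgroup.orderOf_mk, hrord]; norm_num
          · rw [Subgroup.orderOf_mk, hs0ord]
          · intro hmem
            obtain ⟨m, hm⟩ := Subgroup.mem_zpowers_iff.mp hmem
            apply hs0H
            refine Subgroup.mem_zpowers_iff.mpr ⟨m, ?_⟩
            have := congrArg (Subtype.val) hm
            push_cast at this
            exact this
    · -- j ≥ 4 : C is characteristic since its generator has order ≥ 8
      refine (hcontra ?_).elim
      intro φ c hc
      have hφd : φ d ∈ C := by
        by_contra hnd
        have h2 := hOut4 _ hnd
        rw [MulEquiv.orderOf_eq φ d, hdord] at h2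
        have : (2:ℕ) ^ (j-1) ≤ 4 := Nat.le_of_dvd (by norm_num) h2
        have : (2:ℕ) ^ 3 ≤ 2 ^ (j-1) := Nat.pow_le_pow_right (by norm_num) (by omega)
        omega
      rw [← hzC] at hc hφd ⊢
      obtain ⟨m, hm⟩ := Subgroup.mem_zpowers_iff.mp hc
      rw [← hm, map_zpow]
      exact zpow_mem hφd m
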